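/- The category of groupoids internal to the category of types (equivalently, of small groupoids, described as diagrams C₂ ⇉ C₁ ⇉ C₀ with composition m : C₂ → C₁, projections π₁, π₂, inversion i, identities e and domain/codomain d, c satisfying the internal-groupoid axioms) is equivalent to the full subcategory of the category of involutive-2-links in Type consisting of the unital and associative ones. The equivalence is induced by the functor F sending an internal groupoid to (θ, φ, m : C₂ → C₁) with θ = ⟨i∘π₁, m⟩ and φ = ⟨m, i∘π₂⟩. -/

import Mathlib

open CategoryTheory

universe u

/-- A pair of parallel maps is *jointly monomorphic*. -/
def JointlyMono {A B C : Type u} (f : A → B) (g : A → C) : Prop :=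
  ∀ a a', f a = f a' → g a = g a' → a = a'

/-- A commutative square of types which is both a pullback and a pushout
(an exact / bicartesian / Dolittle / pulation square). -/
def Bicartesian {P X Y Z : Type u} (fst : P → X) (snd : P → Y)
    (f : X → Z) (g : Y → Z) : Prop :=
  IsPullback (C := Type u) (TypeCat.ofHom fst) (TypeCat.ofHom snd) (TypeCat.ofHom f)
    (TypeCat.ofHom g) ∧
  IsPushout (C := Type u) (TypeCat.ofHom fst) (TypeCat.ofHom snd) (TypeCat.ofHom f)
    (TypeCat.ofHom g)

/-- An involutive-2-link `(θ, φ, m)` is *unital* (Definition 1(1)). -/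
def IsUnitalLink {C₂ C₁ : Type u} (θ φ : C₂ → C₂) (m : C₂ → C₁) : Prop :=
  JointlyMono m (m ∘ θ) ∧ JointlyMono m (m ∘ φ) ∧
  ∃ e₁ e₂ : C₁ → C₂,
    m ∘ e₁ = id ∧ m ∘ e₂ = id ∧
    θ ∘ e₂ = e₂ ∧ φ ∘ e₁ = e₁ ∧
    m ∘ θ ∘ φ ∘ e₂ = m ∘ φ ∘ θ ∘ e₁ ∧
    (m ∘ θ ∘ e₁) ∘ (m ∘ φ) = (m ∘ φ ∘ e₂) ∘ (m ∘ θ) ∧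
    (m ∘ θ ∘ e₁) ∘ m = (m ∘ θ ∘ e₁) ∘ (m ∘ θ) ∧
    (m ∘ φ ∘ e₂) ∘ m = (m ∘ φ ∘ e₂) ∘ (m ∘ φ)

/-- An involutive-2-link `(θ, φ, m)` is *associative* (Definition 1(2)):
the pair `(π₁, π₂) = (m ∘ φ, m ∘ θ)` is bi-exact and the induced morphisms
`m₁, m₂` satisfy `m ∘ m₁ = m ∘ m₂`. -/
def IsAssociativeLink {C₂ C₁ : Type u} (θ φ : C₂ → C₂) (m : C₂ → C₁) : Prop :=
  ∃ (C₀ : Type u) (d c : C₁ → C₀) (C₃ : Type u) (p₁ p₂ : C₃ → C₂),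
    Bicartesian (m ∘ φ) (m ∘ θ) d c ∧
    Bicartesian p₂ p₁ (m ∘ φ) (m ∘ θ) ∧
    ∃ m₁ m₂ : C₃ → C₂,
      (m ∘ φ) ∘ m₁ = m ∘ p₁ ∧ (m ∘ θ) ∘ m₁ = (m ∘ θ) ∘ p₂ ∧
      (m ∘ φ) ∘ m₂ = (m ∘ φ) ∘ p₁ ∧ (m ∘ θ) ∘ m₂ = m ∘ p₂ ∧
      m ∘ m₁ = m ∘ m₂

/-- An internal groupoid in the category of types, presented as a diagram
`C₂ ⇉ C₁ ⇉ C₀` where `C₂` is the canonical pullback of `d` and `c`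
(composable pairs), with composition `m`, inversion `i`, identities `e`. -/
structure IntGpd : Type (u + 1) where
  C₀ : Type u
  C₁ : Type u
  d : C₁ → C₀
  c : C₁ → C₀
  e : C₀ → C₁
  i : C₁ → C₁
  m : (y x : C₁) → d y = c x → C₁
  de : ∀ a, d (e a) = a
  ce : ∀ a, c (e a) = a
  dm : ∀ y x h, d (m y x h) = d x
  cm : ∀ y x h, c (m y x h) = c y
  di : ∀ x, d (i x) = c x
  ci : ∀ x, c (i x) = d x
  ii : ∀ x, i (i x) = x
  ie : ∀ a, i (e a) = e a
  idr : ∀ x (h : d x = c (e (d x))), m x (e (d x)) h = x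
  idl : ∀ x (h : d (e (c x)) = c x), m (e (c x)) x h = x
  invr : ∀ x (h : d x = c (i x)), m x (i x) h = e (c x)
  invl : ∀ x (h : d (i x) = c x), m (i x) x h = e (d x)
  assoc : ∀ z y x (hzy : d z = c y) (hyx : d y = c x)
    (h₁ : d (m z y hzy) = c x) (h₂ : d z = c (m y x hyx)),
    m (m z y hzy) x h₁ = m z (m y x hyx) h₂

namespace IntGpd

variable (G : IntGpd.{u})

/-- The object of composable pairs. -/
def Pairs : Type u := {p : G.C₁ × G.C₁ // G.d p.1 = G.c p.2}

theorem m_congr {y y' x x' : G.C₁} (hy : y = y') (hx : x = x')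
    (h : G.d y = G.c x) (h' : G.d y' = G.c x') :
    G.m y x h = G.m y' x' h' := by subst hy; subst hx; rfl

/-- Composition as a map on composable pairs. -/
def mp : G.Pairs → G.C₁ := fun p => G.m p.1.1 p.1.2 p.2

/-- The involution `θ = ⟨i ∘ π₁, m⟩`. -/
def θp : G.Pairs → G.Pairs :=
  fun p => ⟨(G.i p.1.1, G.mp p), by rw [G.di, mp, G.cm]⟩

/-- The involution `φ = ⟨m, i ∘ π₂⟩`. -/
def φp : G.Pairs → G.Pairs :=
  fun p => ⟨(G.mp p, G.i p.1.2), by rw [G.ci, mp, G.dm]⟩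

theorem m_inv_m (y x : G.C₁) (h : G.d y = G.c x)
    (h₂ : G.d (G.i y) = G.c (G.m y x h)) :
    G.m (G.i y) (G.m y x h) h₂ = x := by
  rw [← G.assoc (G.i y) y x (by rw [G.di]) h (by rw [G.dm]; exact h) h₂]
  rw [G.m_congr (y := G.m (G.i y) y (by rw [G.di])) (y' := G.e (G.c x))
    (x := x) (x' := x) (by rw [G.invl]; exact congrArg G.e h) rfl _ (by rw [G.de])]
  exact G.idl x _

theorem m_m_inv (y x : G.C₁) (h : G.d y = G.c x)
    (h₂ : G.d (G.m y x h) = G.c (G.i x)) :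
    G.m (G.m y x h) (G.i x) h₂ = y := by
  rw [G.assoc y x (G.i x) h (by rw [G.ci]) h₂ (by rw [G.cm, ← h])]
  rw [G.m_congr (y := y) (y' := y) (x := G.m x (G.i x) (by rw [G.ci]))
    (x' := G.e (G.d y)) rfl (by rw [G.invr]; exact congrArg G.e h.symm) _ (by rw [G.ce])]
  exact G.idr y _

theorem θθ : G.θp ∘ G.θp = id := by
  funext p
  apply Subtype.ext
  apply Prod.ext
  · simp [θp, mp, G.ii]
  · simp only [θp, mp, Function.comp_apply, id_eq]
    exact G.m_inv_m p.1.1 p.1.2 p.2 _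

theorem φφ : G.φp ∘ G.φp = id := by
  funext p
  apply Subtype.ext
  apply Prod.ext
  · simp only [φp, mp, Function.comp_apply, id_eq]
    exact G.m_m_inv p.1.1 p.1.2 p.2 _
  · simp [φp, mp, G.ii]

theorem braid : G.θp ∘ G.φp ∘ G.θp = G.φp ∘ G.θp ∘ G.φp := by
  funext p
  -- names
  apply Subtype.ext
  apply Prod.ext
  · -- first components
    simp only [Function.comp_apply, θp, φp, mp]
    rw [G.m_inv_m, G.m_inv_m]
  · simp only [Function.comp_apply, θp, φp, mp]
    rw [G.m_m_inv, G.m_m_inv]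

end IntGpd

/-- An involutive-2-link in the category of types: a map `m : A → B`
together with two interlinked involutions on its domain. -/
structure I2L : Type (u + 1) where
  A : Type u
  B : Type u
  θ : A → A
  φ : A → A
  m : A → B
  θθ : θ ∘ θ = id
  φφ : φ ∘ φ = id
  braid : θ ∘ φ ∘ θ = φ ∘ θ ∘ φ

/-- Morphisms of involutive-2-links. -/
structure I2LHom (L M : I2L.{u}) : Type u where
  f : L.A → M.A
  g : L.B → M.B
  commθ : f ∘ L.θ = M.θ ∘ f
  commφ : f ∘ L.φ = M.φ ∘ f
  commm : M.m ∘ f = g ∘ L.m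

theorem I2LHom.ext' {L M : I2L.{u}} {u v : I2LHom L M}
    (h1 : u.f = v.f) (h2 : u.g = v.g) : u = v := by
  cases u; cases v; simp_all

/-- The category of involutive-2-links in the category of types. -/
instance : Category I2L.{u} where
  Hom := I2LHom
  id L := ⟨id, id, rfl, rfl, rfl⟩
  comp u v := ⟨v.f ∘ u.f, v.g ∘ u.g,
    by rw [Function.comp_assoc, u.commθ, ← Function.comp_assoc, v.commθ,
      Function.comp_assoc],
    by rw [Function.comp_assoc, u.commφ, ← Function.comp_assoc, v.commφ,
      Function.comp_assoc],
    by rw [← Function.comp_assoc, v.commm, Function.comp_assoc, u.commm,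
      ← Function.comp_assoc]⟩
  id_comp u := I2LHom.ext' rfl rfl
  comp_id u := I2LHom.ext' rfl rfl
  assoc u v w := I2LHom.ext' rfl rfl

/-- Morphisms of internal groupoids (internal functors). -/
structure IntGpdHom (G H : IntGpd.{u}) : Type u where
  f₀ : G.C₀ → H.C₀
  f₁ : G.C₁ → H.C₁
  hd : ∀ x, H.d (f₁ x) = f₀ (G.d x)
  hc : ∀ x, H.c (f₁ x) = f₀ (G.c x)
  he : ∀ a, f₁ (G.e a) = H.e (f₀ a)
  hi : ∀ x, f₁ (G.i x) = H.i (f₁ x)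
  hm : ∀ y x (h : G.d y = G.c x) (h' : H.d (f₁ y) = H.c (f₁ x)),
    f₁ (G.m y x h) = H.m (f₁ y) (f₁ x) h'

theorem IntGpdHom.ext' {G H : IntGpd.{u}} {u v : IntGpdHom G H}
    (h0 : u.f₀ = v.f₀) (h1 : u.f₁ = v.f₁) : u = v := by
  cases u; cases v; simp_all

/-- The category of internal groupoids in the category of types. -/
instance : Category IntGpd.{u} where
  Hom := IntGpdHom
  id G := ⟨id, id, fun _ => rfl, fun _ => rfl, fun _ => rfl, fun _ => rfl,
    fun y x h h' => G.m_congr rfl rfl h h'⟩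
  comp {G H K} u v :=
    ⟨v.f₀ ∘ u.f₀, v.f₁ ∘ u.f₁,
      fun x => by simp [v.hd, u.hd],
      fun x => by simp [v.hc, u.hc],
      fun a => by simp [u.he, v.he],
      fun x => by simp [u.hi, v.hi],
      fun y x h h' => by
        simp only [Function.comp_apply]
        rw [u.hm y x h (by rw [u.hd, u.hc, h]),
          v.hm _ _ (by rw [u.hd, u.hc, h]) h']⟩
  id_comp u := IntGpdHom.ext' rfl rfl
  comp_id u := IntGpdHom.ext' rfl rfl
  assoc u v w := IntGpdHom.ext' rfl rfl

/-- The object part of the functor `F`: it forgets the underlying reflexive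
graph, keeps `m : C₂ → C₁` and contracts the remaining information into the
two involutions `θ = ⟨i ∘ π₁, m⟩` and `φ = ⟨m, i ∘ π₂⟩`. -/
def FObj (G : IntGpd.{u}) : I2L.{u} where
  A := G.Pairs
  B := G.C₁
  θ := G.θp
  φ := G.φp
  m := G.mp
  θθ := G.θθ
  φφ := G.φφ
  braid := G.braid

/-- The morphism part of the functor `F`. -/
def FHom {G H : IntGpd.{u}} (u : G ⟶ H) : FObj G ⟶ FObj H where
  f p := ⟨(u.f₁ p.1.1, u.f₁ p.1.2), by rw [u.hd, u.hc, p.2]⟩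
  g := u.f₁
  commθ := by
    funext p
    apply Subtype.ext
    apply Prod.ext
    · exact u.hi p.1.1
    · exact u.hm p.1.1 p.1.2 p.2 _
  commφ := by
    funext p
    apply Subtype.ext
    apply Prod.ext
    · exact u.hm p.1.1 p.1.2 p.2 _
    · exact u.hi p.1.2
  commm := by
    funext p
    exact (u.hm p.1.1 p.1.2 p.2 _).symm

/-- Involutive-2-links which are unital and associative. -/
def GoodLink (L : I2L.{u}) : Prop :=
  IsUnitalLink L.θ L.φ L.m ∧ IsAssociativeLink L.θ L.φ L.m

open CategoryTheory.Limits

section TypeBicartesian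
variable {P X Y Z : Type u} {fst : P → X} {snd : P → Y} {f : X → Z} {g : Y → Z}

lemma isPullback_types
    (comm : ∀ p, f (fst p) = g (snd p))
    (ex : ∀ x y, f x = g y → ∃! p, fst p = x ∧ snd p = y) :
    IsPullback (C := Type u) (TypeCat.ofHom fst) (TypeCat.ofHom snd) (TypeCat.ofHom f)
      (TypeCat.ofHom g) := by
  have w : TypeCat.ofHom fst ≫ TypeCat.ofHom f = TypeCat.ofHom snd ≫ TypeCat.ofHom g :=
    ConcreteCategory.hom_ext _ _ fun p => comm p
  have key : ∀ (s : PullbackCone (TypeCat.ofHom f) (TypeCat.ofHom g)) (t : s.pt),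
      f (s.fst t) = g (s.snd t) :=
    fun s t => ConcreteCategory.congr_hom s.condition t
  refine IsPullback.of_isLimit (PullbackCone.IsLimit.mk w
    (fun s => TypeCat.ofHom fun t => (ex (s.fst t) (s.snd t) (key s t)).choose)
    (fun s => ConcreteCategory.hom_ext _ _ fun t =>
      (ex (s.fst t) (s.snd t) (key s t)).choose_spec.1.1)
    (fun s => ConcreteCategory.hom_ext _ _ fun t =>
      (ex (s.fst t) (s.snd t) (key s t)).choose_spec.1.2)
    (fun s m h1 h2 => ConcreteCategory.hom_ext _ _ fun t => by
      have k1 : fst (m t) = s.fst t := ConcreteCategory.congr_hom h1 t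
      have k2 : snd (m t) = s.snd t := ConcreteCategory.congr_hom h2 t
      exact (ex (s.fst t) (s.snd t) (key s t)).choose_spec.2 (m t) ⟨k1, k2⟩))

lemma CategoryTheory.IsPullback.existsUnique_types (h : IsPullback (C := Type u) (TypeCat.ofHom fst) (TypeCat.ofHom snd) (TypeCat.ofHom f)
      (TypeCat.ofHom g)) :
    ∀ x y, f x = g y → ∃! p, fst p = x ∧ snd p = y := by
  intro x y hxy
  let l : PUnit.{u+1} ⟶ P := h.lift (TypeCat.ofHom fun _ => x) (TypeCat.ofHom fun _ => y)
    (ConcreteCategory.hom_ext _ _ fun _ => hxy)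
  have hf : fst (l PUnit.unit) = x := ConcreteCategory.congr_hom (h.lift_fst _ _ _) PUnit.unit
  have hs : snd (l PUnit.unit) = y := ConcreteCategory.congr_hom (h.lift_snd _ _ _) PUnit.unit
  refine ⟨l PUnit.unit, ⟨hf, hs⟩, ?_⟩
  intro q hq
  have := h.hom_ext (k := TypeCat.ofHom fun _ : PUnit.{u+1} => q) (l := l)
    (ConcreteCategory.hom_ext _ _ fun _ =>
      show fst q = fst (l PUnit.unit) from hq.1.trans hf.symm)
    (ConcreteCategory.hom_ext _ _ fun _ =>
      show snd q = snd (l PUnit.unit) from hq.2.trans hs.symm)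
  exact ConcreteCategory.congr_hom this PUnit.unit

lemma isPushout_types
    (comm : ∀ p, f (fst p) = g (snd p))
    (desc : ∀ {T : Type u} (i₁ : X → T) (i₂ : Y → T),
      (∀ p, i₁ (fst p) = i₂ (snd p)) → Z → T)
    (fac₁ : ∀ {T : Type u} (i₁ : X → T) (i₂ : Y → T) (w) (x), desc i₁ i₂ w (f x) = i₁ x)
    (fac₂ : ∀ {T : Type u} (i₁ : X → T) (i₂ : Y → T) (w) (y), desc i₁ i₂ w (g y) = i₂ y)
    (uniq : ∀ {T : Type u} (u v : Z → T), (∀ x, u (f x) = v (f x)) →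
      (∀ y, u (g y) = v (g y)) → u = v) :
    IsPushout (C := Type u) (TypeCat.ofHom fst) (TypeCat.ofHom snd) (TypeCat.ofHom f)
      (TypeCat.ofHom g) := by
  have w : TypeCat.ofHom fst ≫ TypeCat.ofHom f = TypeCat.ofHom snd ≫ TypeCat.ofHom g :=
    ConcreteCategory.hom_ext _ _ fun p => comm p
  refine IsPushout.of_isColimit (PushoutCocone.IsColimit.mk w
    (fun s => TypeCat.ofHom (desc (fun x => s.inl x) (fun y => s.inr y)
      (fun p => ConcreteCategory.congr_hom s.condition p)))
    (fun s => ConcreteCategory.hom_ext _ _ fun x => fac₁ _ _ _ x)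
    (fun s => ConcreteCategory.hom_ext _ _ fun y => fac₂ _ _ _ y)
    (fun s m h1 h2 => ?_))
  have := uniq (fun z => m z) (fun z => desc (fun x => s.inl x) (fun y => s.inr y)
      (fun p => ConcreteCategory.congr_hom s.condition p) z)
    (fun x => (ConcreteCategory.congr_hom h1 x).trans (fac₁ _ _ _ x).symm)
    (fun y => (ConcreteCategory.congr_hom h2 y).trans (fac₂ _ _ _ y).symm)
  exact ConcreteCategory.hom_ext _ _ fun t => congrFun this t

lemma CategoryTheory.IsPushout.jointly_epi_types (h : IsPushout (C := Type u) (TypeCat.ofHom fst) (TypeCat.ofHom snd) (TypeCat.ofHom f)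
      (TypeCat.ofHom g))
    {T : Type u} (u v : Z → T) (h₁ : ∀ x, u (f x) = v (f x))
    (h₂ : ∀ y, u (g y) = v (g y)) : u = v := by
  have := h.hom_ext (k := TypeCat.ofHom u) (l := TypeCat.ofHom v)
    (ConcreteCategory.hom_ext _ _ h₁) (ConcreteCategory.hom_ext _ _ h₂)
  exact funext fun z => ConcreteCategory.congr_hom this z

end TypeBicartesian

namespace IntGpd

variable (G : IntGpd.{u})

theorem mφ_eq (p : G.Pairs) : G.mp (G.φp p) = p.1.1 := G.m_m_inv p.1.1 p.1.2 p.2 _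

theorem mθ_eq (p : G.Pairs) : G.mp (G.θp p) = p.1.2 := G.m_inv_m p.1.1 p.1.2 p.2 _

theorem cancel_left {w u u' : G.C₁} (h : G.d w = G.c u) (h' : G.d w = G.c u')
    (eq : G.m w u h = G.m w u' h') : u = u' := by
  have h1 := G.m_inv_m w u h (by rw [G.di, G.cm])
  have h2 := G.m_inv_m w u' h' (by rw [G.di, G.cm])
  rw [← h1, ← h2]
  exact G.m_congr rfl eq _ _

theorem cancel_right {u u' w : G.C₁} (h : G.d u = G.c w) (h' : G.d u' = G.c w)
    (eq : G.m u w h = G.m u' w h') : u = u' := by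
  have h1 := G.m_m_inv u w h (by rw [G.ci, G.dm])
  have h2 := G.m_m_inv u' w h' (by rw [G.ci, G.dm])
  rw [← h1, ← h2]
  exact G.m_congr eq rfl _ _

/-- `(b, e (d b))` as a composable pair. -/
def pe₁ (b : G.C₁) : G.Pairs := ⟨(b, G.e (G.d b)), (G.ce _).symm⟩

/-- `(e (c b), b)` as a composable pair. -/
def pe₂ (b : G.C₁) : G.Pairs := ⟨(G.e (G.c b), b), G.de _⟩

/-- The object of composable triples. -/
def Triples : Type u :=
  {t : G.C₁ × G.C₁ × G.C₁ // G.d t.1 = G.c t.2.1 ∧ G.d t.2.1 = G.c t.2.2}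

def tp₁ (t : G.Triples) : G.Pairs := ⟨(t.1.1, t.1.2.1), t.2.1⟩

def tp₂ (t : G.Triples) : G.Pairs := ⟨(t.1.2.1, t.1.2.2), t.2.2⟩

end IntGpd

theorem good (G : IntGpd.{u}) : GoodLink (FObj G) := by
  have hφ : G.mp ∘ G.φp = fun p : G.Pairs => p.1.1 := funext G.mφ_eq
  have hθ : G.mp ∘ G.θp = fun p : G.Pairs => p.1.2 := funext G.mθ_eq
  constructor
  · -- unital
    refine ⟨?_, ?_, G.pe₁, G.pe₂, ?_, ?_, ?_, ?_, ?_, ?_, ?_, ?_⟩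
    · -- JointlyMono m (m ∘ θ)
      intro p p' h1 h2
      have hx : p.1.2 = p'.1.2 := by
        rw [← G.mθ_eq p, ← G.mθ_eq p']; exact h2
      have e1 := G.m_m_inv p.1.1 p.1.2 p.2 (by rw [G.ci, G.dm])
      have e2 := G.m_m_inv p'.1.1 p'.1.2 p'.2 (by rw [G.ci, G.dm])
      have hy : p.1.1 = p'.1.1 := by
        rw [← e1, ← e2]
        exact G.m_congr h1 (by rw [hx]) _ _
      exact Subtype.ext (Prod.ext hy hx)
    · -- JointlyMono m (m ∘ φ)
      intro p p' h1 h2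
      have hy : p.1.1 = p'.1.1 := by
        rw [← G.mφ_eq p, ← G.mφ_eq p']; exact h2
      have e1 := G.m_inv_m p.1.1 p.1.2 p.2 (by rw [G.di, G.cm])
      have e2 := G.m_inv_m p'.1.1 p'.1.2 p'.2 (by rw [G.di, G.cm])
      have hx : p.1.2 = p'.1.2 := by
        rw [← e1, ← e2]
        exact G.m_congr (by rw [hy]) h1 _ _
      exact Subtype.ext (Prod.ext hy hx)
    · funext b; exact G.idr b _
    · funext b; exact G.idl b _
    · funext b
      apply Subtype.ext
      apply Prod.ext
      · show G.i (G.e (G.c b)) = G.e (G.c b)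
        exact G.ie _
      · show G.mp (G.pe₂ b) = b
        exact G.idl b _
    · funext b
      apply Subtype.ext
      apply Prod.ext
      · show G.mp (G.pe₁ b) = b
        exact G.idr b _
      · show G.i (G.e (G.d b)) = G.e (G.d b)
        exact G.ie _
    · funext b
      show G.mp (G.θp (G.φp (G.pe₂ b))) = G.mp (G.φp (G.θp (G.pe₁ b)))
      rw [G.mθ_eq, G.mφ_eq]
      rfl
    · funext p
      show G.mp (G.θp (G.pe₁ (G.mp (G.φp p)))) = G.mp (G.φp (G.pe₂ (G.mp (G.θp p))))
      rw [G.mθ_eq (G.pe₁ (G.mp (G.φp p))), G.mφ_eq (G.pe₂ (G.mp (G.θp p))),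
        G.mφ_eq p, G.mθ_eq p]
      show G.e (G.d p.1.1) = G.e (G.c p.1.2)
      exact congrArg G.e p.2
    · funext p
      show G.mp (G.θp (G.pe₁ (G.mp p))) = G.mp (G.θp (G.pe₁ (G.mp (G.θp p))))
      rw [G.mθ_eq (G.pe₁ (G.mp p)), G.mθ_eq (G.pe₁ (G.mp (G.θp p))), G.mθ_eq p]
      show G.e (G.d (G.mp p)) = G.e (G.d p.1.2)
      exact congrArg G.e (G.dm p.1.1 p.1.2 p.2)
    · funext p
      show G.mp (G.φp (G.pe₂ (G.mp p))) = G.mp (G.φp (G.pe₂ (G.mp (G.φp p))))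
      rw [G.mφ_eq (G.pe₂ (G.mp p)), G.mφ_eq (G.pe₂ (G.mp (G.φp p))), G.mφ_eq p]
      show G.e (G.c (G.mp p)) = G.e (G.c p.1.1)
      exact congrArg G.e (G.cm p.1.1 p.1.2 p.2)
  · -- associative
    refine ⟨G.C₀, G.d, G.c, G.Triples, G.tp₁, G.tp₂, ?_, ?_, ?_⟩
    · rw [show (FObj G).m ∘ (FObj G).φ = _ from hφ, show (FObj G).m ∘ (FObj G).θ = _ from hθ]
      refine ⟨?_, ?_⟩
      · exact isPullback_types (fun p => p.2)
          (fun y x h => ⟨⟨(y, x), h⟩, ⟨rfl, rfl⟩,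
            fun q hq => Subtype.ext (Prod.ext hq.1 hq.2)⟩)
      · refine isPushout_types (fun p => p.2)
          (fun i₁ i₂ w t => i₂ (G.e t)) ?_ ?_ ?_
        · intro T i₁ i₂ w y
          exact (w ⟨(y, G.e (G.d y)), (G.ce _).symm⟩).symm
        · intro T i₁ i₂ w x
          exact ((w ⟨(G.e (G.c x), G.e (G.c x)), by rw [G.de, G.ce]⟩).symm).trans
            (w ⟨(G.e (G.c x), x), G.de _⟩)
        · intro T u v hu hv
          funext t
          calc u t = u (G.c (G.e t)) := by rw [G.ce]
            _ = v (G.c (G.e t)) := hv _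
            _ = v t := by rw [G.ce]
    · rw [show (FObj G).m ∘ (FObj G).φ = _ from hφ, show (FObj G).m ∘ (FObj G).θ = _ from hθ]
      refine ⟨?_, ?_⟩
      · refine isPullback_types (fun t => rfl) ?_
        intro q r h
        refine ⟨⟨(r.1.1, q.1.1, q.1.2), ⟨by rw [h]; exact r.2, q.2⟩⟩, ⟨?_, ?_⟩, ?_⟩
        · exact Subtype.ext rfl
        · apply Subtype.ext
          show (r.1.1, q.1.1) = r.1
          rw [h]
        · intro t' ht'
          apply Subtype.ext
          have h2 := congrArg Subtype.val ht'.1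
          have h1 := congrArg Subtype.val ht'.2
          have e1 : t'.1.1 = r.1.1 := congrArg Prod.fst h1
          have e2 : t'.1.2.1 = q.1.1 := congrArg Prod.fst h2
          have e3 : t'.1.2.2 = q.1.2 := congrArg Prod.snd h2
          exact Prod.ext e1 (Prod.ext e2 e3)
      · refine isPushout_types (fun t => rfl)
          (fun i₁ i₂ w b => i₁ (G.pe₁ b)) ?_ ?_ ?_
        · intro T i₁ i₂ w q
          exact (w ⟨(G.e (G.c q.1.1), q.1.1, G.e (G.d q.1.1)), ⟨G.de _, (G.ce _).symm⟩⟩).trans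
            (w ⟨(G.e (G.c q.1.1), q.1.1, q.1.2), ⟨G.de _, q.2⟩⟩).symm
        · intro T i₁ i₂ w r
          exact w ⟨(r.1.1, r.1.2, G.e (G.d r.1.2)), ⟨r.2, (G.ce _).symm⟩⟩
        · intro T u v hu hv
          funext b
          exact hu (G.pe₁ b)
    · rw [show (FObj G).m ∘ (FObj G).φ = _ from hφ, show (FObj G).m ∘ (FObj G).θ = _ from hθ]
      refine ⟨fun t => ⟨(G.m t.1.1 t.1.2.1 t.2.1, t.1.2.2), by rw [G.dm]; exact t.2.2⟩,
        fun t => ⟨(t.1.1, G.m t.1.2.1 t.1.2.2 t.2.2), by rw [G.cm]; exact t.2.1⟩,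
        rfl, rfl, rfl, rfl, ?_⟩
      funext t
      exact G.assoc t.1.1 t.1.2.1 t.1.2.2 t.2.1 t.2.2 _ _

/-- The functor from internal groupoids to unital associative involutive-2-links. -/
def Flink : IntGpd.{u} ⥤ ObjectProperty.FullSubcategory GoodLink.{u} where
  obj G := ⟨FObj G, good G⟩
  map u := ObjectProperty.homMk (FHom u)
  map_id G := InducedCategory.hom_ext (I2LHom.ext' (funext fun p => Subtype.ext rfl) rfl)
  map_comp u v := InducedCategory.hom_ext (I2LHom.ext' (funext fun p => Subtype.ext rfl) rfl)

instance Flink.faithful : Flink.{u}.Faithful where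
  map_injective {G H} {u v} h := by
    have hg : u.f₁ = v.f₁ := congrArg (fun k => I2LHom.g k.hom) h
    refine IntGpdHom.ext' ?_ hg
    funext a
    have h1 : H.c (u.f₁ (G.e a)) = u.f₀ a := by rw [u.hc, G.ce]
    have h2 : H.c (v.f₁ (G.e a)) = v.f₀ a := by rw [v.hc, G.ce]
    rw [← h1, ← h2, hg]

theorem IntGpd.idem_eq_e (H : IntGpd.{u}) {b : H.C₁} (h : H.d b = H.c b)
    (hb : H.m b b h = b) : b = H.e (H.c b) := by
  have h1 := H.m_m_inv b b h (by rw [H.ci, H.dm])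
  have h2 : H.m b (H.i b) (H.ci b).symm = b :=
    (H.m_congr hb.symm rfl (H.ci b).symm (by rw [H.ci, H.dm])).trans h1
  exact h2.symm.trans (H.invr b _)

instance Flink.full : Flink.{u}.Full where
  map_surjective {G H} w' := by
    obtain ⟨w⟩ := w'
    change FObj G ⟶ FObj H at w
    have hcomm : ∀ q : G.Pairs, H.mp (w.f q) = w.g (G.mp q) := fun q => congrFun w.commm q
    have hfst : ∀ p : G.Pairs, (w.f p).1.1 = w.g p.1.1 := by
      intro p
      calc (w.f p).1.1 = H.mp (H.φp (w.f p)) := (H.mφ_eq _).symm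
        _ = H.mp (w.f (G.φp p)) := congrArg H.mp (congrFun w.commφ p).symm
        _ = (show H.C₁ from w.g (G.mp (G.φp p))) := hcomm _
        _ = (show H.C₁ from w.g p.1.1) := by rw [G.mφ_eq]
    have hsnd : ∀ p : G.Pairs, (w.f p).1.2 = w.g p.1.2 := by
      intro p
      calc (w.f p).1.2 = H.mp (H.θp (w.f p)) := (H.mθ_eq _).symm
        _ = H.mp (w.f (G.θp p)) := congrArg H.mp (congrFun w.commθ p).symm
        _ = (show H.C₁ from w.g (G.mp (G.θp p))) := hcomm _
        _ = (show H.C₁ from w.g p.1.2) := by rw [G.mθ_eq]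
    have hcomp : ∀ (y x : G.C₁), G.d y = G.c x → H.d (w.g y) = H.c (w.g x) := by
      intro y x h
      have h2 := (w.f ⟨(y, x), h⟩).2
      rwa [hfst ⟨(y, x), h⟩, hsnd ⟨(y, x), h⟩] at h2
    have hm' : ∀ (y x : G.C₁) (h : G.d y = G.c x) (h' : H.d (w.g y) = H.c (w.g x)),
        w.g (G.m y x h) = H.m (w.g y) (w.g x) h' := by
      intro y x h h'
      calc (show H.C₁ from w.g (G.m y x h)) = H.mp (w.f ⟨(y, x), h⟩) := (hcomm ⟨(y, x), h⟩).symm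
        _ = H.m (w.g y) (w.g x) h' := H.m_congr (hfst ⟨(y, x), h⟩) (hsnd ⟨(y, x), h⟩) _ h'
    have hi' : ∀ y : G.C₁, w.g (G.i y) = H.i (w.g y) := by
      intro y
      calc (show H.C₁ from w.g (G.i y)) = (w.f (G.θp (G.pe₁ y))).1.1 := (hfst (G.θp (G.pe₁ y))).symm
        _ = (H.θp (w.f (G.pe₁ y))).1.1 := congrArg (fun q : H.Pairs => q.1.1)
            (congrFun w.commθ (G.pe₁ y))
        _ = H.i (w.g y) := by
            show H.i ((w.f (G.pe₁ y)).1.1) = H.i (w.g y)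
            rw [hfst (G.pe₁ y)]
            rfl
    have he' : ∀ a : G.C₀, w.g (G.e a) = H.e (H.c (w.g (G.e a))) := by
      intro a
      have hco : G.d (G.e a) = G.c (G.e a) := by rw [G.de, G.ce]
      have hid : G.m (G.e a) (G.e a) hco = G.e a :=
        (G.m_congr (congrArg G.e (G.ce a).symm) rfl hco (by rw [G.de, G.ce])).trans
          (G.idl (G.e a) (by rw [G.de, G.ce]))
      have hidH : H.m (w.g (G.e a)) (w.g (G.e a)) (hcomp _ _ hco) = w.g (G.e a) := by
        rw [← hm' _ _ hco (hcomp _ _ hco)]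
        exact congrArg w.g hid
      exact H.idem_eq_e (hcomp _ _ hco) hidH
    have hd' : ∀ y : G.C₁, H.d (w.g y) = H.c (w.g (G.e (G.d y))) :=
      fun y => hcomp _ _ (G.pe₁ y).2
    have hc' : ∀ y : G.C₁, H.c (w.g y) = H.c (w.g (G.e (G.c y))) := by
      intro y
      have k := hcomp _ _ (G.pe₂ y).2
      exact k.symm.trans ((congrArg H.d (he' (G.c y))).trans (H.de _))
    refine ⟨⟨fun a => H.c (w.g (G.e a)), w.g, hd', hc', he', hi', hm'⟩, ?_⟩
    refine InducedCategory.hom_ext (I2LHom.ext' ?_ rfl)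
    funext p
    exact Subtype.ext (Prod.ext (hfst p).symm (hsnd p).symm)

theorem IntGpd.unique_div_right (G : IntGpd.{u}) {u y x w : G.C₁}
    (h1 : G.d u = G.c w) (h3 : G.d y = G.c x) (hw : w = G.m y x h3)
    (hm : G.m u w h1 = x) : u = G.i y := by
  have hcw : G.c w = G.c y := by rw [hw, G.cm]
  have h2 : G.d (G.i y) = G.c w := by rw [G.di, hcw]
  have hm2 : G.m (G.i y) w h2 = x :=
    (G.m_congr rfl hw h2 (by rw [G.di, G.cm])).trans
      (G.m_inv_m y x h3 (by rw [G.di, G.cm]))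
  exact G.cancel_right h1 h2 (hm.trans hm2.symm)

theorem IntGpd.unique_div_left (G : IntGpd.{u}) {w v y x : G.C₁}
    (h1 : G.d w = G.c v) (h3 : G.d y = G.c x) (hw : w = G.m y x h3)
    (hm : G.m w v h1 = y) : v = G.i x := by
  have hdw : G.d w = G.d x := by rw [hw, G.dm]
  have h2 : G.d w = G.c (G.i x) := by rw [hdw, G.ci]
  have hm2 : G.m w (G.i x) h2 = y :=
    (G.m_congr hw rfl h2 (by rw [G.ci, G.dm])).trans
      (G.m_m_inv y x h3 (by rw [G.ci, G.dm]))
  exact G.cancel_left h1 h2 (hm.trans hm2.symm)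

theorem essSurj_aux (L : I2L.{u}) (hL : GoodLink L) :
    ∃ G : IntGpd.{u}, Nonempty ((⟨FObj G, good G⟩ : ObjectProperty.FullSubcategory GoodLink.{u}) ≅ ⟨L, hL⟩) := by
  obtain ⟨hu, ha⟩ := hL
  obtain ⟨jm1, jm2, e₁, e₂, u1, u2, u3, u4, u5, u6, u7, u8⟩ := hu
  obtain ⟨C₀, d, c, C₃, p₁, p₂, ⟨pb1, po1⟩, ⟨pb2, po2⟩, m₁, m₂, q1, q2, q3, q4, q5⟩ := ha
  -- pointwise versions of the axioms
  have θθp : ∀ a, L.θ (L.θ a) = a := fun a => congrFun L.θθ a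
  have φφp : ∀ a, L.φ (L.φ a) = a := fun a => congrFun L.φφ a
  have u1p : ∀ b, L.m (e₁ b) = b := fun b => congrFun u1 b
  have u2p : ∀ b, L.m (e₂ b) = b := fun b => congrFun u2 b
  have u3p : ∀ b, L.θ (e₂ b) = e₂ b := fun b => congrFun u3 b
  have u4p : ∀ b, L.φ (e₁ b) = e₁ b := fun b => congrFun u4 b
  have u5p : ∀ b, L.m (L.θ (L.φ (e₂ b))) = L.m (L.φ (L.θ (e₁ b))) := fun b => congrFun u5 b
  have u6p : ∀ a, L.m (L.θ (e₁ (L.m (L.φ a)))) = L.m (L.φ (e₂ (L.m (L.θ a)))) :=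
    fun a => congrFun u6 a
  have u7p : ∀ a, L.m (L.θ (e₁ (L.m a))) = L.m (L.θ (e₁ (L.m (L.θ a)))) :=
    fun a => congrFun u7 a
  have u8p : ∀ a, L.m (L.φ (e₂ (L.m a))) = L.m (L.φ (e₂ (L.m (L.φ a))))  :=
    fun a => congrFun u8 a
  have q1p : ∀ t, L.m (L.φ (m₁ t)) = L.m (p₁ t) := fun t => congrFun q1 t
  have q2p : ∀ t, L.m (L.θ (m₁ t)) = L.m (L.θ (p₂ t)) := fun t => congrFun q2 t
  have q3p : ∀ t, L.m (L.φ (m₂ t)) = L.m (L.φ (p₁ t)) := fun t => congrFun q3 t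
  have q4p : ∀ t, L.m (L.θ (m₂ t)) = L.m (p₂ t) := fun t => congrFun q4 t
  have q5p : ∀ t, L.m (m₁ t) = L.m (m₂ t) := fun t => congrFun q5 t
  -- the pullback structure on A
  have L3 : ∀ a, d (L.m (L.φ a)) = c (L.m (L.θ a)) := fun a => ConcreteCategory.congr_hom pb1.w a
  have pb := pb1.existsUnique_types
  let pr : ∀ y x, d y = c x → L.A := fun y x h => (pb y x h).choose
  have pr1 : ∀ y x h, L.m (L.φ (pr y x h)) = y := fun y x h => (pb y x h).choose_spec.1.1
  have pr2 : ∀ y x h, L.m (L.θ (pr y x h)) = x := fun y x h => (pb y x h).choose_spec.1.2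
  have prU : ∀ y x (h : d y = c x) (a : L.A),
      L.m (L.φ a) = y → L.m (L.θ a) = x → a = pr y x h :=
    fun y x h a h1 h2 => (pb y x h).choose_spec.2 a ⟨h1, h2⟩
  have prA : ∀ a, pr (L.m (L.φ a)) (L.m (L.θ a)) (L3 a) = a :=
    fun a => (prU _ _ (L3 a) a rfl rfl).symm
  -- projections of e₁, e₂
  have pe1 : ∀ b, L.m (L.φ (e₁ b)) = b := fun b => by rw [u4p]; exact u1p b
  have pe2 : ∀ b, L.m (L.θ (e₂ b)) = b := fun b => by rw [u3p]; exact u2p b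
  -- the identity-assigning map e
  have w6 : TypeCat.ofHom (L.m ∘ L.φ) ≫ TypeCat.ofHom (fun b => L.m (L.θ (e₁ b))) =
      TypeCat.ofHom (L.m ∘ L.θ) ≫ TypeCat.ofHom (fun b => L.m (L.φ (e₂ b))) :=
    ConcreteCategory.hom_ext _ _ fun a => u6p a
  let e : C₀ → L.B := fun t => po1.desc (TypeCat.ofHom fun b => L.m (L.θ (e₁ b)))
    (TypeCat.ofHom fun b => L.m (L.φ (e₂ b))) w6 t
  have ed : ∀ b, e (d b) = L.m (L.θ (e₁ b)) :=
    fun b => ConcreteCategory.congr_hom (po1.inl_desc (TypeCat.ofHom fun b => L.m (L.θ (e₁ b)))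
      (TypeCat.ofHom fun b => L.m (L.φ (e₂ b))) w6) b
  have ec : ∀ b, e (c b) = L.m (L.φ (e₂ b)) :=
    fun b => ConcreteCategory.congr_hom (po1.inr_desc (TypeCat.ofHom fun b => L.m (L.θ (e₁ b)))
      (TypeCat.ofHom fun b => L.m (L.φ (e₂ b))) w6) b
  -- source/target computations for E₁, E₂
  have cE1 : ∀ b, c (L.m (L.θ (e₁ b))) = d b := fun b => by
    have h := L3 (e₁ b)
    rw [pe1] at h
    exact h.symm
  have dE2 : ∀ b, d (L.m (L.φ (e₂ b))) = c b := fun b => by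
    have h := L3 (e₂ b)
    rwa [pe2] at h
  have E1idem : ∀ b, L.m (L.θ (e₁ (L.m (L.θ (e₁ b))))) = L.m (L.θ (e₁ b)) := fun b => by
    have h := u7p (e₁ b)
    rw [u1p b] at h
    exact h.symm
  have E2idem : ∀ b, L.m (L.φ (e₂ (L.m (L.φ (e₂ b))))) = L.m (L.φ (e₂ b)) := fun b => by
    have h := u8p (e₂ b)
    rw [u2p b] at h
    exact h.symm
  have dE1 : ∀ b, d (L.m (L.θ (e₁ b))) = d b := fun b =>
    ((cE1 (L.m (L.θ (e₁ b)))).symm.trans (congrArg c (E1idem b))).trans (cE1 b)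
  have cE2 : ∀ b, c (L.m (L.φ (e₂ b))) = c b := fun b =>
    ((dE2 (L.m (L.φ (e₂ b)))).symm.trans (congrArg d (E2idem b))).trans (dE2 b)
  have de_id : ∀ t, d (e t) = t := fun t => congrFun
    (po1.jointly_epi_types (fun t => d (e t)) (fun t => t)
      (fun b => by show d (e (d b)) = d b; rw [ed b]; exact dE1 b)
      (fun b => by show d (e (c b)) = c b; rw [ec b]; exact dE2 b)) t
  have ce_id : ∀ t, c (e t) = t := fun t => congrFun
    (po1.jointly_epi_types (fun t => c (e t)) (fun t => t)
      (fun b => by show c (e (d b)) = d b; rw [ed b]; exact cE1 b)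
      (fun b => by show c (e (c b)) = c b; rw [ec b]; exact cE2 b)) t
  -- the inversion map
  let i : L.B → L.B := fun b => L.m (L.θ (L.φ (e₂ b)))
  have i_def : ∀ b, i b = L.m (L.θ (L.φ (e₂ b))) := fun b => rfl
  have dib : ∀ b, d (i b) = c b := by
    intro b
    have h := L3 (L.θ (e₁ b))
    rw [θθp (e₁ b), u1p b, ← u5p b, ← i_def b] at h
    exact h
  have cib : ∀ b, c (i b) = d b := by
    intro b
    have h := L3 (L.φ (e₂ b))
    rw [φφp (e₂ b), u2p b, ← i_def b] at h
    exact h.symm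
  have iib : ∀ b, i (i b) = b := by
    intro b
    have hmeq : L.m (L.θ (e₁ (i b))) = L.m (L.φ (e₂ b)) :=
      ((ed (i b)).symm.trans (by rw [dib b])).trans (ec b)
    have hπ2 : L.m (L.θ (L.θ (e₁ (i b)))) = L.m (L.θ (L.φ (e₂ b))) := by
      rw [θθp (e₁ (i b)), u1p (i b)]
    have hab := jm1 (L.θ (e₁ (i b))) (L.φ (e₂ b)) hmeq hπ2
    calc i (i b) = L.m (L.θ (L.φ (e₂ (i b)))) := i_def (i b)
      _ = L.m (L.φ (L.θ (e₁ (i b)))) := u5p (i b)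
      _ = L.m (L.φ (L.φ (e₂ b))) := congrArg (fun z => L.m (L.φ z)) hab
      _ = L.m (e₂ b) := by rw [φφp]
      _ = b := u2p b
  have iE1 : ∀ b, i (L.m (L.θ (e₁ b))) = L.m (L.θ (e₁ b)) := by
    intro b
    have hmeq : L.m (e₁ (L.m (L.θ (e₁ b)))) = L.m (L.θ (e₁ (L.m (L.θ (e₁ b))))) :=
      (u1p _).trans (E1idem b).symm
    have hπ2 : L.m (L.θ (e₁ (L.m (L.θ (e₁ b))))) =
        L.m (L.θ (L.θ (e₁ (L.m (L.θ (e₁ b)))))) := by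
      rw [θθp (e₁ (L.m (L.θ (e₁ b))))]
      exact (E1idem b).trans (u1p _).symm
    have hab := jm1 (e₁ (L.m (L.θ (e₁ b)))) (L.θ (e₁ (L.m (L.θ (e₁ b))))) hmeq hπ2
    calc i (L.m (L.θ (e₁ b)))
        = L.m (L.θ (L.φ (e₂ (L.m (L.θ (e₁ b)))))) := i_def _
      _ = L.m (L.φ (L.θ (e₁ (L.m (L.θ (e₁ b)))))) := u5p _
      _ = L.m (L.φ (e₁ (L.m (L.θ (e₁ b))))) := (congrArg (fun z => L.m (L.φ z)) hab).symm
      _ = L.m (L.θ (e₁ b)) := pe1 _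
  have iE2 : ∀ b, i (L.m (L.φ (e₂ b))) = L.m (L.φ (e₂ b)) := by
    intro b
    have hmeq : L.m (e₂ (L.m (L.φ (e₂ b)))) = L.m (L.φ (e₂ (L.m (L.φ (e₂ b))))) :=
      (u2p _).trans (E2idem b).symm
    have hπ1 : L.m (L.φ (e₂ (L.m (L.φ (e₂ b))))) =
        L.m (L.φ (L.φ (e₂ (L.m (L.φ (e₂ b)))))) := by
      rw [φφp (e₂ (L.m (L.φ (e₂ b))))]
      exact (E2idem b).trans (u2p _).symm
    have hab := jm2 (e₂ (L.m (L.φ (e₂ b)))) (L.φ (e₂ (L.m (L.φ (e₂ b))))) hmeq hπ1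
    calc i (L.m (L.φ (e₂ b)))
        = L.m (L.θ (L.φ (e₂ (L.m (L.φ (e₂ b)))))) := i_def _
      _ = L.m (L.θ (e₂ (L.m (L.φ (e₂ b))))) := (congrArg (fun z => L.m (L.θ z)) hab).symm
      _ = L.m (L.φ (e₂ b)) := pe2 _
  have ie_id : ∀ t, i (e t) = e t := fun t => congrFun
    (po1.jointly_epi_types (fun t => i (e t)) e
      (fun b => by show i (e (d b)) = e (d b); rw [ed b]; exact iE1 b)
      (fun b => by show i (e (c b)) = e (c b); rw [ec b]; exact iE2 b)) t
  -- source and target of composites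
  have dmL : ∀ a, d (L.m a) = d (L.m (L.θ a)) := fun a =>
    ((dE1 (L.m a)).symm.trans (congrArg d (u7p a))).trans (dE1 (L.m (L.θ a)))
  have cmL : ∀ a, c (L.m a) = c (L.m (L.φ a)) := fun a =>
    ((cE2 (L.m a)).symm.trans (congrArg c (u8p a))).trans (cE2 (L.m (L.φ a)))
  -- the internal groupoid
  let G : IntGpd.{u} :=
    { C₀ := C₀, C₁ := L.B, d := d, c := c, e := e, i := i,
      m := fun y x h => L.m (pr y x h),
      de := de_id, ce := ce_id,
      dm := fun y x h => by
        rw [dmL (pr y x h)]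
        exact congrArg d (pr2 y x h),
      cm := fun y x h => by
        rw [cmL (pr y x h)]
        exact congrArg c (pr1 y x h),
      di := dib, ci := cib, ii := iib, ie := ie_id,
      idr := fun x h => by
        have hpe : pr x (e (d x)) h = e₁ x :=
          (prU x (e (d x)) h (e₁ x) (pe1 x) (ed x).symm).symm
        show L.m (pr x (e (d x)) h) = x
        rw [hpe]
        exact u1p x,
      idl := fun x h => by
        have hpe : pr (e (c x)) x h = e₂ x :=
          (prU (e (c x)) x h (e₂ x) (ec x).symm (pe2 x)).symm
        show L.m (pr (e (c x)) x h) = x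
        rw [hpe]
        exact u2p x,
      invr := fun x h => by
        have hpe : pr x (i x) h = L.φ (e₂ x) :=
          (prU x (i x) h (L.φ (e₂ x)) (by rw [φφp]; exact u2p x) (i_def x).symm).symm
        show L.m (pr x (i x) h) = e (c x)
        rw [hpe]
        exact (ec x).symm,
      invl := fun x h => by
        have hpe : pr (i x) x h = L.θ (e₁ x) :=
          (prU (i x) x h (L.θ (e₁ x)) ((u5p x).symm.trans (i_def x).symm)
            (by rw [θθp]; exact u1p x)).symm
        show L.m (pr (i x) x h) = e (d x)
        rw [hpe]
        exact (ed x).symm,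
      assoc := fun z y x hzy hyx h₁ h₂ => by
        obtain ⟨t, ⟨ht2, ht1⟩, -⟩ := pb2.existsUnique_types (pr y x hyx) (pr z y hzy)
          ((pr1 y x hyx).trans (pr2 z y hzy).symm)
        have hm₁ : m₁ t = pr (L.m (pr z y hzy)) x h₁ :=
          prU _ _ h₁ (m₁ t)
            ((q1p t).trans (congrArg L.m ht1))
            ((q2p t).trans ((congrArg (fun a => L.m (L.θ a)) ht2).trans (pr2 y x hyx)))
        have hm₂ : m₂ t = pr z (L.m (pr y x hyx)) h₂ :=
          prU _ _ h₂ (m₂ t)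
            ((q3p t).trans ((congrArg (fun a => L.m (L.φ a)) ht1).trans (pr1 z y hzy)))
            ((q4p t).trans (congrArg L.m ht2))
        show L.m (pr (L.m (pr z y hzy)) x h₁) = L.m (pr z (L.m (pr y x hyx)) h₂)
        rw [← hm₁, ← hm₂]
        exact q5p t }
  -- the two crucial exchange identities
  have claimθ : ∀ a : L.A, L.m (L.φ (L.θ a)) = i (L.m (L.φ a)) := by
    intro a
    have h1 : d (L.m (L.φ (L.θ a))) = c (L.m a) := by
      have h := L3 (L.θ a)
      rwa [θθp a] at h
    have hw : L.m a = G.m (L.m (L.φ a)) (L.m (L.θ a)) (L3 a) := (congrArg L.m (prA a)).symm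
    have hpr : pr (L.m (L.φ (L.θ a))) (L.m a) h1 = L.θ a :=
      (prU _ _ h1 (L.θ a) rfl (by rw [θθp a])).symm
    have hm : G.m (L.m (L.φ (L.θ a))) (L.m a) h1 = L.m (L.θ a) := by
      show L.m (pr (L.m (L.φ (L.θ a))) (L.m a) h1) = L.m (L.θ a)
      rw [hpr]
    exact G.unique_div_right h1 (L3 a) hw hm
  have claimφ : ∀ a : L.A, L.m (L.θ (L.φ a)) = i (L.m (L.θ a)) := by
    intro a
    have h1 : d (L.m a) = c (L.m (L.θ (L.φ a))) := by
      have h := L3 (L.φ a)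
      rwa [φφp a] at h
    have hw : L.m a = G.m (L.m (L.φ a)) (L.m (L.θ a)) (L3 a) := (congrArg L.m (prA a)).symm
    have hpr : pr (L.m a) (L.m (L.θ (L.φ a))) h1 = L.φ a :=
      (prU _ _ h1 (L.φ a) (by rw [φφp a]) rfl).symm
    have hm : G.m (L.m a) (L.m (L.θ (L.φ a))) h1 = L.m (L.φ a) := by
      show L.m (pr (L.m a) (L.m (L.θ (L.φ a))) h1) = L.m (L.φ a)
      rw [hpr]
    exact G.unique_div_left h1 (L3 a) hw hm
  -- the isomorphism
  refine ⟨G, ⟨{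
    hom := ObjectProperty.homMk
      { f := fun p => pr p.1.1 p.1.2 p.2, g := id, commθ := ?_, commφ := ?_,
        commm := ?_ },
    inv := ObjectProperty.homMk
      { f := fun a => ⟨(L.m (L.φ a), L.m (L.θ a)), L3 a⟩, g := id, commθ := ?_,
        commφ := ?_, commm := ?_ },
    hom_inv_id := ?_, inv_hom_id := ?_ }⟩⟩
  · funext p
    show pr (G.θp p).1.1 (G.θp p).1.2 (G.θp p).2 = L.θ (pr p.1.1 p.1.2 p.2)
    have hA : L.m (L.φ (L.θ (pr p.1.1 p.1.2 p.2))) = (G.θp p).1.1 := by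
      show L.m (L.φ (L.θ (pr p.1.1 p.1.2 p.2))) = i p.1.1
      rw [claimθ (pr p.1.1 p.1.2 p.2), pr1 p.1.1 p.1.2 p.2]
    have hB : L.m (L.θ (L.θ (pr p.1.1 p.1.2 p.2))) = (G.θp p).1.2 := by
      show L.m (L.θ (L.θ (pr p.1.1 p.1.2 p.2))) = L.m (pr p.1.1 p.1.2 p.2)
      rw [θθp]
    exact (prU _ _ (G.θp p).2 (L.θ (pr p.1.1 p.1.2 p.2)) hA hB).symm
  · funext p
    show pr (G.φp p).1.1 (G.φp p).1.2 (G.φp p).2 = L.φ (pr p.1.1 p.1.2 p.2)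
    have hA : L.m (L.φ (L.φ (pr p.1.1 p.1.2 p.2))) = (G.φp p).1.1 := by
      show L.m (L.φ (L.φ (pr p.1.1 p.1.2 p.2))) = L.m (pr p.1.1 p.1.2 p.2)
      rw [φφp]
    have hB : L.m (L.θ (L.φ (pr p.1.1 p.1.2 p.2))) = (G.φp p).1.2 := by
      show L.m (L.θ (L.φ (pr p.1.1 p.1.2 p.2))) = i p.1.2
      rw [claimφ (pr p.1.1 p.1.2 p.2), pr2 p.1.1 p.1.2 p.2]
    exact (prU _ _ (G.φp p).2 (L.φ (pr p.1.1 p.1.2 p.2)) hA hB).symm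
  · funext p
    rfl
  · funext a
    apply Subtype.ext
    apply Prod.ext
    · show L.m (L.φ (L.θ a)) = i (L.m (L.φ a))
      exact claimθ a
    · show L.m (L.θ (L.θ a)) = L.m (pr (L.m (L.φ a)) (L.m (L.θ a)) (L3 a))
      rw [θθp a, prA a]
  · funext a
    apply Subtype.ext
    apply Prod.ext
    · show L.m (L.φ (L.φ a)) = L.m (pr (L.m (L.φ a)) (L.m (L.θ a)) (L3 a))
      rw [φφp a, prA a]
    · show L.m (L.θ (L.φ a)) = i (L.m (L.θ a))
      exact claimφ a
  · funext a
    show L.m (pr (L.m (L.φ a)) (L.m (L.θ a)) (L3 a)) = L.m a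
    rw [prA a]
  · refine InducedCategory.hom_ext (I2LHom.ext' ?_ rfl)
    funext p
    apply Subtype.ext
    apply Prod.ext
    · show L.m (L.φ (pr p.1.1 p.1.2 p.2)) = p.1.1
      exact pr1 p.1.1 p.1.2 p.2
    · show L.m (L.θ (pr p.1.1 p.1.2 p.2)) = p.1.2
      exact pr2 p.1.1 p.1.2 p.2
  · refine InducedCategory.hom_ext (I2LHom.ext' ?_ rfl)
    funext a
    show pr (L.m (L.φ a)) (L.m (L.θ a)) (L3 a) = a
    exact prA a

instance Flink.essSurj : Flink.{u}.EssSurj where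
  mem_essImage Y := by
    obtain ⟨G, ⟨iso⟩⟩ := essSurj_aux Y.obj Y.property
    exact ⟨G, ⟨iso⟩⟩

/-- **Theorem 1.** The category of internal groupoids (in the category of
types) is equivalent to the full subcategory of involutive-2-links that are
unital and associative, the equivalence being induced by the functor `F`
sending an internal groupoid to `(θ, φ, m : C₂ → C₁)` with
`θ = ⟨i ∘ π₁, m⟩` and `φ = ⟨m, i ∘ π₂⟩`. -/
theorem internal_groupoids_equiv_unital_associative_involutive_2_links :
    ∃ (F : IntGpd.{u} ⥤ ObjectProperty.FullSubcategory GoodLink.{u})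
      (hobj : ∀ G : IntGpd.{u}, (F.obj G).obj = FObj G),
      F.IsEquivalence ∧
      ∀ (G H : IntGpd.{u}) (u : G ⟶ H),
        (ObjectProperty.ι GoodLink).map (F.map u) =
          eqToHom (hobj G) ≫ FHom u ≫ eqToHom (hobj H).symm := by
  refine ⟨Flink, fun G => rfl, {}, fun G H u => ?_⟩
  show (ObjectProperty.ι GoodLink).map (Flink.map u) = 𝟙 _ ≫ FHom u ≫ 𝟙 _
  rw [Category.comp_id, Category.id_comp]
  rfl
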